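/- Let u ∈ ℝ be fixed, σ > 0, α ∈ (0,2). For d ∈ (0,1) set a = σ d^{α/2}, z₁ = 1, z₂ = e^{a u}, and let f_d be the bivariate Brown-Resnick density with exponent V_d(z₁,z₂) = (1/z₁)Φ(a/2 + u) + (1/z₂)Φ(a/2 − u), viewed as a function of α. Then lim_{d→0} (1/log d) · ∂/∂α log f_d(z₁,z₂;α) = (u² − 1)/2. -/

import Mathlib

open Real Set Filter

/-- The standard Gaussian cumulative distribution function. -/
noncomputable def Phi (x : ℝ) : ℝ :=
  ∫ t in Set.Iic x, Real.exp (-t ^ 2 / 2) / Real.sqrt (2 * Real.pi)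

/-- The bivariate Brown-Resnick exponent function with `a = σ d^{α/2}`. -/
noncomputable def Vpair (a z₁ z₂ : ℝ) : ℝ :=
  (1 / z₁) * Phi (a / 2 + Real.log (z₂ / z₁) / a)
    + (1 / z₂) * Phi (a / 2 - Real.log (z₂ / z₁) / a)

/-- The bivariate Brown-Resnick density `f = ∂²/∂z₁∂z₂ exp (-V)`. -/
noncomputable def fpair (a z₁ z₂ : ℝ) : ℝ :=
  deriv (fun t₁ => deriv (fun t₂ => Real.exp (-(Vpair a t₁ t₂))) z₂) z₁

section Aux
open MeasureTheory intervalIntegral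

noncomputable def gauss (x : ℝ) : ℝ := Real.exp (-x ^ 2 / 2) / Real.sqrt (2 * Real.pi)

lemma gauss_pos (x : ℝ) : 0 < gauss x := by
  unfold gauss
  positivity

lemma gauss_neg (x : ℝ) : gauss (-x) = gauss x := by unfold gauss; ring_nf

lemma continuous_gauss : Continuous gauss := by
  unfold gauss; fun_prop

lemma integrable_gauss : Integrable gauss := by
  have h := integrable_exp_neg_mul_sq (b := (1/2:ℝ)) (by norm_num)
  have : gauss = fun x => Real.exp (-(1/2) * x ^ 2) * (Real.sqrt (2 * Real.pi))⁻¹ := by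
    funext x; unfold gauss; rw [div_eq_mul_inv]; ring_nf
  rw [this]
  exact h.mul_const _

lemma hasDerivAt_Phi (x : ℝ) : HasDerivAt Phi (gauss x) x := by
  have key : ∀ y : ℝ, Phi y = Phi 0 + ∫ t in (0:ℝ)..y, gauss t := by
    intro y
    have := integral_Iic_sub_Iic (μ := volume) (f := gauss) (a := (0:ℝ)) (b := y)
      integrable_gauss.integrableOn integrable_gauss.integrableOn
    unfold Phi gauss at *
    linarith [this]
  have h1 : HasDerivAt (fun y => Phi 0 + ∫ t in (0:ℝ)..y, gauss t) (gauss x) x := by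
    have := intervalIntegral.integral_hasDerivAt_right
      (f := gauss) (a := (0:ℝ)) (b := x)
      integrable_gauss.intervalIntegrable
      continuous_gauss.aestronglyMeasurable.stronglyMeasurableAtFilter
      continuous_gauss.continuousAt
    exact this.const_add _
  exact h1.congr_of_eventuallyEq (Filter.Eventually.of_forall fun y => (key y))

lemma Phi_nonneg (x : ℝ) : 0 ≤ Phi x := by
  unfold Phi
  exact setIntegral_nonneg measurableSet_Iic (fun t _ => by positivity)

lemma Phi_pos (x : ℝ) : 0 < Phi x := by
  have h2 : 0 < ∫ t in Set.Ioc (x-1) x, gauss t := by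
    rw [← intervalIntegral.integral_of_le (by linarith)]
    exact intervalIntegral.intervalIntegral_pos_of_pos
      integrable_gauss.intervalIntegrable gauss_pos (by linarith)
  have h1 : ∫ t in Set.Ioc (x-1) x, gauss t ≤ ∫ t in Set.Iic x, gauss t := by
    apply setIntegral_mono_set integrable_gauss.integrableOn
      (Filter.Eventually.of_forall fun t => (gauss_pos t).le)
    exact HasSubset.Subset.eventuallyLE Set.Ioc_subset_Iic_self
  unfold Phi; unfold gauss at h1 h2; linarith

lemma hasDerivAt_gauss (x : ℝ) : HasDerivAt gauss (-x * gauss x) x := by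
  have h1 : HasDerivAt (fun x : ℝ => -x ^ 2 / 2) (-x) x := by
    have := ((hasDerivAt_pow 2 x).neg.div_const 2)
    refine this.congr_deriv (Eq.symm ?_); push_cast; ring
  have := ((Real.hasDerivAt_exp (-x^2/2)).comp x h1).div_const (Real.sqrt (2 * Real.pi))
  refine this.congr_deriv (Eq.symm ?_)
  unfold gauss; ring

lemma gauss_identity {a t₁ t₂ : ℝ} (ha : a ≠ 0) (h₁ : 0 < t₁) (h₂ : 0 < t₂) :
    gauss (a/2 + Real.log (t₂/t₁)/a) * t₂ = gauss (a/2 - Real.log (t₂/t₁)/a) * t₁ := by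
  set L := Real.log (t₂/t₁) with hLdef
  have key : Real.exp (-(a/2 + L/a)^2/2) = Real.exp (-(a/2 - L/a)^2/2) * Real.exp (-L) := by
    rw [← Real.exp_add]; congr 1; field_simp; ring
  have hEL : Real.exp (-L) = t₁ / t₂ := by
    rw [Real.exp_neg, hLdef, Real.exp_log (div_pos h₂ h₁)]
    rw [inv_div]
  unfold gauss
  rw [key, hEL]
  have h2π : Real.sqrt (2 * Real.pi) ≠ 0 := by positivity
  field_simp

lemma hasDerivAt_inner {a t₁ z₂ : ℝ} (ha : 0 < a) (h₁ : 0 < t₁) (h₂ : 0 < z₂) :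
    HasDerivAt (fun t₂ => Real.exp (-(Vpair a t₁ t₂)))
      (Real.exp (-(Vpair a t₁ z₂)) * (Phi (a/2 - Real.log (z₂/t₁)/a) / z₂^2)) z₂ := by
  have hlog : HasDerivAt (fun t₂ : ℝ => Real.log (t₂/t₁)) (1/z₂) z₂ := by
    have h := (Real.hasDerivAt_log (div_pos h₂ h₁).ne').comp z₂ ((hasDerivAt_id z₂).div_const t₁)
    refine h.congr_deriv (Eq.symm ?_)
    field_simp
  have hw : HasDerivAt (fun t₂ : ℝ => a/2 + Real.log (t₂/t₁)/a) (1/(z₂*a)) z₂ := by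
    have h := (hlog.div_const a).const_add (a/2)
    refine h.congr_deriv (Eq.symm ?_); field_simp
  have hv : HasDerivAt (fun t₂ : ℝ => a/2 - Real.log (t₂/t₁)/a) (-(1/(z₂*a))) z₂ := by
    have h := (hlog.div_const a).const_sub (a/2)
    refine h.congr_deriv (Eq.symm ?_); field_simp
  have hPw := ((hasDerivAt_Phi _).comp z₂ hw).const_mul (1/t₁)
  have hPv := (hasDerivAt_Phi _).comp z₂ hv
  have h := hPw.add ((hasDerivAt_inv h₂.ne').mul hPv)
  have heq : (fun t₂ => Vpair a t₁ t₂)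
      = ((fun y => 1 / t₁ * (Phi ∘ fun t₂ : ℝ => a / 2 + Real.log (t₂ / t₁) / a) y)
          + (fun y => y⁻¹) * Phi ∘ fun t₂ : ℝ => a / 2 - Real.log (t₂ / t₁) / a) := by
    funext y
    simp only [Function.comp, Vpair, one_div, Pi.add_apply, Pi.mul_apply]
  rw [← heq] at h
  have hE := (h.neg).exp
  refine hE.congr_deriv (Eq.symm ?_)
  simp only [Function.comp]
  have hid := gauss_identity ha.ne' h₁ h₂
  set G₁ := gauss (a/2 + Real.log (z₂/t₁)/a) with hG₁
  set G₂ := gauss (a/2 - Real.log (z₂/t₁)/a) with hG₂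
  set P := Phi (a/2 - Real.log (z₂/t₁)/a) with hP
  set E := Real.exp (-(Vpair a t₁ z₂)) with hE'
  field_simp
  ring_nf
  linear_combination E * hid

lemma hasDerivAt_outer {a z₂ : ℝ} (ha : 0 < a) (h₂ : 0 < z₂) :
    HasDerivAt (fun t₁ => Real.exp (-(Vpair a t₁ z₂)) * (Phi (a/2 - Real.log (z₂/t₁)/a) / z₂^2))
      (Real.exp (-(Vpair a 1 z₂)) * ((Phi (a/2 + Real.log (z₂/1)/a) * Phi (a/2 - Real.log (z₂/1)/a)
        + gauss (a/2 - Real.log (z₂/1)/a) / a) / z₂^2)) 1 := by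
  have hlog₁ : HasDerivAt (fun t₁ : ℝ => Real.log (z₂/t₁)) (-1) 1 := by
    have hin : HasDerivAt (fun t₁ : ℝ => z₂/t₁) (-z₂) 1 := by
      have h := (hasDerivAt_const (1:ℝ) z₂).div (hasDerivAt_id (1:ℝ)) one_ne_zero
      refine h.congr_deriv (Eq.symm ?_); norm_num
    have h := (Real.hasDerivAt_log (by positivity : z₂/(1:ℝ) ≠ 0)).comp 1 hin
    refine h.congr_deriv (Eq.symm ?_)
    field_simp
  have hw₁ : HasDerivAt (fun t₁ : ℝ => a/2 + Real.log (z₂/t₁)/a) (-(1/a)) 1 := by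
    have h := (hlog₁.div_const a).const_add (a/2)
    refine h.congr_deriv (Eq.symm ?_); field_simp
  have hv₁ : HasDerivAt (fun t₁ : ℝ => a/2 - Real.log (z₂/t₁)/a) (1/a) 1 := by
    have h := (hlog₁.div_const a).const_sub (a/2)
    refine h.congr_deriv (Eq.symm ?_); field_simp
  have hPw := (hasDerivAt_Phi _).comp 1 hw₁
  have hPv := (hasDerivAt_Phi _).comp 1 hv₁
  have hV₁ : HasDerivAt (fun t₁ => Vpair a t₁ z₂)
      (-((1:ℝ)^2)⁻¹ * (Phi ∘ fun t₁ : ℝ => a/2 + Real.log (z₂/t₁)/a) 1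
        + (1:ℝ)⁻¹ * (gauss (a/2 + Real.log (z₂/1)/a) * -(1/a))
        + 1/z₂ * (gauss (a/2 - Real.log (z₂/1)/a) * (1/a))) 1 := by
    have h := ((hasDerivAt_inv one_ne_zero).mul hPw).add (hPv.const_mul (1/z₂))
    have heq : (fun t₁ => Vpair a t₁ z₂)
        = (((fun y => y⁻¹) * Phi ∘ fun t₁ : ℝ => a/2 + Real.log (z₂/t₁)/a)
            + fun y => 1/z₂ * (Phi ∘ fun t₁ : ℝ => a/2 - Real.log (z₂/t₁)/a) y) := by
      funext y
      simp only [Function.comp, Vpair, one_div, Pi.add_apply, Pi.mul_apply]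
    rw [← heq] at h
    exact h
  have hF := (hV₁.neg.exp).mul (hPv.div_const (z₂^2))
  refine hF.congr_deriv (Eq.symm ?_)
  simp only [Function.comp, div_one]
  have hid := gauss_identity ha.ne' one_pos h₂
  rw [div_one] at hid
  set G₁ := gauss (a/2 + Real.log z₂/a) with hG₁
  set G₂ := gauss (a/2 - Real.log z₂/a) with hG₂
  set P₁ := Phi (a/2 + Real.log z₂/a) with hP₁
  set P₂ := Phi (a/2 - Real.log z₂/a) with hP₂
  set E := Real.exp (-(Vpair a 1 z₂)) with hE'
  field_simp
  ring_nf
  linear_combination (-(E * P₂)) * hid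

lemma fpair_eq {a z₂ : ℝ} (ha : 0 < a) (h₂ : 0 < z₂) :
    fpair a 1 z₂ = Real.exp (-(Vpair a 1 z₂)) *
      ((Phi (a/2 + Real.log z₂/a) * Phi (a/2 - Real.log z₂/a)
        + gauss (a/2 - Real.log z₂/a) / a) / z₂^2) := by
  have hev : (fun t₁ => deriv (fun t₂ => Real.exp (-(Vpair a t₁ t₂))) z₂)
      =ᶠ[nhds 1] (fun t₁ => Real.exp (-(Vpair a t₁ z₂)) * (Phi (a/2 - Real.log (z₂/t₁)/a) / z₂^2)) := by
    filter_upwards [eventually_gt_nhds zero_lt_one] with t₁ ht₁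
    exact (hasDerivAt_inner ha ht₁ h₂).deriv
  unfold fpair
  rw [hev.deriv_eq, (hasDerivAt_outer ha h₂).deriv, div_one]

/-- The log-density score in `a`, with `L = log z₂`. -/
noncomputable def Dfun (z₂ a : ℝ) : ℝ :=
  -(gauss (a/2 + Real.log z₂/a) * (1/2 - Real.log z₂/a^2)
      + (1/z₂) * (gauss (a/2 - Real.log z₂/a) * (1/2 + Real.log z₂/a^2)))
    + (gauss (a/2 + Real.log z₂/a) * (1/2 - Real.log z₂/a^2) * Phi (a/2 - Real.log z₂/a)
        + Phi (a/2 + Real.log z₂/a) * (gauss (a/2 - Real.log z₂/a) * (1/2 + Real.log z₂/a^2))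
        + (-(a/2 - Real.log z₂/a) * gauss (a/2 - Real.log z₂/a) * (1/2 + Real.log z₂/a^2) * a
            - gauss (a/2 - Real.log z₂/a)) / a^2)
      / (Phi (a/2 + Real.log z₂/a) * Phi (a/2 - Real.log z₂/a) + gauss (a/2 - Real.log z₂/a) / a)

lemma score_aux {E N Np V' z : ℝ} (hE : E ≠ 0) (hN : N ≠ 0) (hz : z ≠ 0) :
    (E * -V' * (N / z^2) + E * (Np / z^2)) / (E * (N / z^2)) = -V' + Np / N := by
  field_simp

lemma Nfun_pos {z₂ a : ℝ} (ha : 0 < a) :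
    0 < Phi (a/2 + Real.log z₂/a) * Phi (a/2 - Real.log z₂/a) + gauss (a/2 - Real.log z₂/a) / a := by
  have := Phi_pos (a/2 + Real.log z₂/a)
  have := Phi_pos (a/2 - Real.log z₂/a)
  have := gauss_pos (a/2 - Real.log z₂/a)
  positivity

set_option maxHeartbeats 1000000 in
lemma hasDerivAt_logfpair {z₂ : ℝ} (h₂ : 0 < z₂) {a : ℝ} (ha : 0 < a) :
    HasDerivAt (fun a => Real.log (fpair a 1 z₂)) (Dfun z₂ a) a := by
  set L := Real.log z₂ with hL
  have hq1 : HasDerivAt (fun a : ℝ => a/2 + L/a) (1/2 - L/a^2) a := by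
    have h := ((hasDerivAt_id a).div_const 2).add
      ((hasDerivAt_const a L).div (hasDerivAt_id a) ha.ne')
    refine h.congr_deriv (Eq.symm ?_)
    simp only [id]; field_simp
    ring
  have hq2 : HasDerivAt (fun a : ℝ => a/2 - L/a) (1/2 + L/a^2) a := by
    have h := ((hasDerivAt_id a).div_const 2).sub
      ((hasDerivAt_const a L).div (hasDerivAt_id a) ha.ne')
    refine h.congr_deriv (Eq.symm ?_)
    simp only [id]; field_simp
    ring
  have hP1 := (hasDerivAt_Phi _).comp a hq1
  have hP2 := (hasDerivAt_Phi _).comp a hq2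
  have hg2 := (hasDerivAt_gauss _).comp a hq2
  have hN : HasDerivAt
      (fun a => Phi (a/2 + L/a) * Phi (a/2 - L/a) + gauss (a/2 - L/a) / a)
      (gauss (a/2 + L/a) * (1/2 - L/a^2) * Phi (a/2 - L/a)
        + Phi (a/2 + L/a) * (gauss (a/2 - L/a) * (1/2 + L/a^2))
        + (-(a/2 - L/a) * gauss (a/2 - L/a) * (1/2 + L/a^2) * a - gauss (a/2 - L/a)) / a^2) a := by
    have h := (hP1.mul hP2).add (hg2.div (hasDerivAt_id a) ha.ne')
    refine h.congr_deriv (Eq.symm ?_)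
    simp [Function.comp]
  have hVp : HasDerivAt (fun a => Vpair a 1 z₂)
      (gauss (a/2 + L/a) * (1/2 - L/a^2) + (1/z₂) * (gauss (a/2 - L/a) * (1/2 + L/a^2))) a := by
    have h := hP1.add (hP2.const_mul (1/z₂))
    have heq : (fun a => Vpair a 1 z₂)
        = (fun y => (Phi ∘ fun a : ℝ => a/2 + L/a) y + 1/z₂ * (Phi ∘ fun a : ℝ => a/2 - L/a) y) := by
      funext y
      simp [Function.comp, Vpair, hL]
    rw [heq]
    exact h
  have hG := (hVp.neg.exp).mul (hN.div_const (z₂^2))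
  have hNpos := Nfun_pos (z₂ := z₂) ha
  have hGpos : 0 < Real.exp (-Vpair a 1 z₂)
      * ((Phi (a/2 + L/a) * Phi (a/2 - L/a) + gauss (a/2 - L/a) / a) / z₂^2) := by
    have := Real.exp_pos (-Vpair a 1 z₂)
    rw [← hL] at hNpos
    positivity
  have hlogG := hG.log (ne_of_gt hGpos)
  have hfinal := hlogG.congr_of_eventuallyEq (f₁ := fun a => Real.log (fpair a 1 z₂)) ?_
  · refine hfinal.congr_deriv (Eq.symm ?_)
    rw [Dfun, ← hL]
    rw [← hL] at hNpos
    set E := Real.exp (-Vpair a 1 z₂) with hE0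
    have hEne : E ≠ 0 := by rw [hE0]; positivity
    set P₁ := Phi (a/2 + L/a) with hP1d
    set P₂ := Phi (a/2 - L/a) with hP2d
    set G₁ := gauss (a/2 + L/a) with hG1d
    set G₂ := gauss (a/2 - L/a) with hG2d
    have hNne : P₁ * P₂ + G₂ / a ≠ 0 := hNpos.ne'
    exact (score_aux hEne hNne h₂.ne').symm
  · filter_upwards [eventually_gt_nhds ha] with a' ha'
    rw [fpair_eq ha' h₂, ← hL]; rfl

noncomputable def Score (u a : ℝ) : ℝ := Dfun (Real.exp (a * u)) a * a / 2

noncomputable def Sexpr (u a : ℝ) : ℝ :=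
  -(gauss (a/2+u) * (a/4 - u/2) + Real.exp (-(a*u)) * (gauss (a/2-u) * (a/4 + u/2)))
  + (gauss (a/2+u) * (a/4 - u/2) * (a * Phi (a/2-u))
     + Phi (a/2+u) * gauss (a/2-u) * (a/4 + u/2) * a
     + (-((a/2-u) * gauss (a/2-u) * ((a/2+u)/2)) - gauss (a/2-u)/2))
    / (a * (Phi (a/2+u) * Phi (a/2-u)) + gauss (a/2-u))

set_option maxHeartbeats 1000000 in
lemma score_eq_sexpr (u : ℝ) {a : ℝ} (ha : 0 < a) : Score u a = Sexpr u a := by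
  unfold Score Dfun Sexpr
  rw [Real.log_exp]
  have h1 : a * u / a = u := by field_simp
  have h2 : a * u / a^2 = u / a := by field_simp
  rw [h1, h2, Real.exp_neg]
  set X := Real.exp (a * u) with hX
  have hXne : X ≠ 0 := by rw [hX]; positivity
  set G₁ := gauss (a/2 + u) with hG1
  set G₂ := gauss (a/2 - u) with hG2
  set P₁ := Phi (a/2 + u) with hP1
  set P₂ := Phi (a/2 - u) with hP2
  have hNne : P₁ * P₂ + G₂ / a ≠ 0 := by
    have := (Phi_pos (a/2 + u)); have := (Phi_pos (a/2 - u)); have := gauss_pos (a/2 - u)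
    rw [hP1, hP2, hG2]; positivity
  have hDne : a * (P₁ * P₂) + G₂ ≠ 0 := by
    have := (Phi_pos (a/2 + u)); have := (Phi_pos (a/2 - u)); have := gauss_pos (a/2 - u)
    rw [hP1, hP2, hG2]; positivity
  have haz : a ≠ 0 := ha.ne'
  have key : ∀ Y : ℝ, Y / (P₁ * P₂ + G₂ / a) = (a * Y) / (a * (P₁ * P₂) + G₂) := by
    intro Y; rw [div_eq_div_iff hNne hDne]; field_simp
  rw [key]
  set D := a * (P₁ * P₂) + G₂ with hD
  field_simp
  ring

lemma continuous_Phi : Continuous Phi :=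
  continuous_iff_continuousAt.2 fun x => (hasDerivAt_Phi x).continuousAt

lemma tendsto_sexpr (u : ℝ) :
    Tendsto (Sexpr u) (nhdsWithin 0 (Set.Ioi 0)) (nhds ((u^2 - 1)/2)) := by
  have hc1 : Continuous fun a : ℝ => a/2 + u := by fun_prop
  have hc2 : Continuous fun a : ℝ => a/2 - u := by fun_prop
  have hcont : ContinuousAt (Sexpr u) 0 := by
    unfold Sexpr
    apply ContinuousAt.add
    · apply ContinuousAt.neg
      apply ContinuousAt.add
      · exact (((continuous_gauss.comp hc1).mul (by fun_prop)).continuousAt)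
      · exact ((Real.continuous_exp.comp (by fun_prop)).mul
          ((continuous_gauss.comp hc2).mul (by fun_prop))).continuousAt
    · apply ContinuousAt.div
      · apply ContinuousAt.add
        apply ContinuousAt.add
        · exact (((continuous_gauss.comp hc1).mul (by fun_prop)).mul
            (continuous_id.mul (continuous_Phi.comp hc2))).continuousAt
        · exact ((((continuous_Phi.comp hc1).mul (continuous_gauss.comp hc2)).mul
            (by fun_prop)).mul continuous_id).continuousAt
        · exact (((hc2.mul (continuous_gauss.comp hc2)).mul (hc1.div_const 2)).neg.sub
            ((continuous_gauss.comp hc2).div_const 2)).continuousAt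
      · exact (continuous_id.mul ((continuous_Phi.comp hc1).mul (continuous_Phi.comp hc2))).add
          (continuous_gauss.comp hc2) |>.continuousAt
      · show (0:ℝ) * (Phi (0/2+u) * Phi (0/2-u)) + gauss (0/2-u) ≠ 0
        simpa using (gauss_pos (0/2 - u)).ne'
  have hval : Sexpr u 0 = (u^2 - 1)/2 := by
    unfold Sexpr
    norm_num
    have hgn : gauss (-u) = gauss u := gauss_neg u
    rw [hgn]
    have hg := (gauss_pos u).ne'
    field_simp
    ring
  have := hcont.continuousWithinAt (s := Set.Ioi 0)
  rw [ContinuousWithinAt] at this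
  rw [← hval]
  exact this

lemma score_reduction {u σ α : ℝ} (hσ : 0 < σ) {d : ℝ} (hd : d ∈ Set.Ioo (0:ℝ) 1) :
    (deriv (fun β : ℝ =>
        Real.log (fpair (σ * d ^ (β / 2)) 1 (Real.exp (σ * d ^ (α / 2) * u)))) α)
      / Real.log d = Score u (σ * d ^ (α / 2)) := by
  have hd0 := hd.1
  have ha₀ : 0 < σ * d ^ (α / 2) := by
    have := Real.rpow_pos_of_pos hd0 (α/2); positivity
  have hz₂ : 0 < Real.exp (σ * d ^ (α / 2) * u) := Real.exp_pos _
  have hA : HasDerivAt (fun β : ℝ => σ * d ^ (β / 2))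
      (σ * d ^ (α / 2) * Real.log d / 2) α := by
    have heq : (fun β : ℝ => σ * d ^ (β / 2))
        = fun β : ℝ => σ * Real.exp (Real.log d * (β / 2)) := by
      funext β; rw [Real.rpow_def_of_pos hd0]
    rw [heq]
    have hin : HasDerivAt (fun β : ℝ => Real.log d * (β / 2)) (Real.log d / 2) α := by
      have h := ((hasDerivAt_id α).div_const 2).const_mul (Real.log d)
      refine h.congr_deriv (Eq.symm ?_); field_simp
    have h := ((Real.hasDerivAt_exp _).comp α hin).const_mul σ
    refine h.congr_deriv (Eq.symm ?_)
    rw [← Real.rpow_def_of_pos hd0]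
    ring
  have hcomp : HasDerivAt (fun β : ℝ =>
      Real.log (fpair (σ * d ^ (β / 2)) 1 (Real.exp (σ * d ^ (α / 2) * u))))
      (Dfun (Real.exp (σ * d ^ (α / 2) * u)) (σ * d ^ (α / 2))
        * (σ * d ^ (α / 2) * Real.log d / 2)) α :=
    by have := (hasDerivAt_logfpair hz₂ ha₀).comp α hA; exact this
  rw [hcomp.deriv]
  have hld : Real.log d ≠ 0 := (Real.log_neg hd0 hd.2).ne
  rw [Score]
  field_simp

end Aux

/-- with `z₁ = 1`, `z₂ = e^{σ d^{α/2} u}` held so that the normalized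
increment equals `u`, the pairwise score in `α` satisfies
`(1/log d) ∂/∂α log f_d(z₁,z₂;α) → (u² - 1)/2` as `d → 0⁺`, `d ∈ (0,1)`. -/
theorem pairwise_score_alpha_limit (u σ α : ℝ) (hσ : 0 < σ) (hα : α ∈ Set.Ioo (0:ℝ) 2) :
    Filter.Tendsto
      (fun d : ℝ =>
        (deriv (fun β : ℝ =>
          Real.log (fpair (σ * d ^ (β / 2)) 1 (Real.exp (σ * d ^ (α / 2) * u)))) α)
          / Real.log d)
      (nhdsWithin 0 (Set.Ioo 0 1)) (nhds ((u ^ 2 - 1) / 2)) := by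
  have hmap : Tendsto (fun d : ℝ => σ * d ^ (α / 2))
      (nhdsWithin 0 (Set.Ioo 0 1)) (nhdsWithin 0 (Set.Ioi 0)) := by
    rw [tendsto_nhdsWithin_iff]
    constructor
    · have hc : ContinuousAt (fun d : ℝ => σ * d ^ (α / 2)) 0 :=
        (Real.continuousAt_rpow_const 0 (α/2) (Or.inr (by linarith [hα.1]))).const_mul σ
      have h0 : σ * (0:ℝ) ^ (α / 2) = 0 := by
        rw [Real.zero_rpow (by linarith [hα.1] : α/2 ≠ 0)]; ring
      have := hc.tendsto
      rw [h0] at this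
      exact this.mono_left nhdsWithin_le_nhds
    · filter_upwards [self_mem_nhdsWithin] with d hd
      have := Real.rpow_pos_of_pos hd.1 (α/2)
      exact mul_pos hσ this
  have hlim := (tendsto_sexpr u).comp hmap
  apply hlim.congr'
  filter_upwards [self_mem_nhdsWithin] with d hd
  have ha₀ : 0 < σ * d ^ (α / 2) := by
    have := Real.rpow_pos_of_pos hd.1 (α/2); positivity
  rw [Function.comp, ← score_eq_sexpr u ha₀, score_reduction hσ hd]
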